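/- For a prime q and integers m, n coprime to q, the sum over even primitive Dirichlet characters χ modulo q of χ̄(mn)·τ(χ)² equals (1/2)·φ(q)·Σ_{±} S(1, ±mn; q) − 1, where S(a,b;q) = Σ_{x mod q, (x,q)=1} e((ax + b·x̄)/q) is the Kloosterman sum. -/

import Mathlib

open Finset

/-- `e x = exp(2πix)`. -/
noncomputable def e (x : ℝ) : ℂ := Complex.exp (2 * Real.pi * Complex.I * x)

/-- The Gauss sum `τ(χ) = Σ_{a mod q} χ(a) e(a/q)`. -/
noncomputable def gaussSum' {q : ℕ} [NeZero q] (χ : DirichletCharacter ℂ q) : ℂ :=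
  ∑ a : ZMod q, χ a * e ((a.val : ℝ) / q)

/-- The Kloosterman sum `S(a,b;q) = Σ_{x mod q, (x,q)=1} e((ax + b·x̄)/q)`. -/
noncomputable def kloosterman {q : ℕ} [NeZero q] (a b : ZMod q) : ℂ :=
  ∑ x : (ZMod q)ˣ, e (((a * (x : ZMod q) + b * ((x⁻¹ : (ZMod q)ˣ) : ZMod q)).val : ℝ) / q)

set_option linter.unusedSectionVars false

variable {q : ℕ} [NeZero q]

lemma e_std (x : ZMod q) : e ((x.val : ℝ) / q) = ZMod.stdAddChar x := by
  rw [ZMod.stdAddChar_apply, ZMod.toCircle_apply, e]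
  push_cast
  ring_nf

lemma sum_split (f : ZMod q → ℂ) (hq : q.Prime) :
    ∑ x : ZMod q, f x = f 0 + ∑ u : (ZMod q)ˣ, f u := by
  haveI := Fact.mk hq
  rw [← Finset.add_sum_erase _ f (Finset.mem_univ 0),
    Finset.sum_subtype (p := fun x : ZMod q => x ≠ 0) _ (fun x => by simp) f]
  congr 1
  exact (Fintype.sum_equiv (unitsEquivNeZero (G₀ := ZMod q))
    (fun u => f (u : ZMod q)) (fun x : {a : ZMod q // a ≠ 0} => f (x : ZMod q))
    (fun u => rfl)).symm

lemma sum_eq_sum_units (hq : q.Prime) (f : ZMod q → ℂ) (h : f 0 = 0) :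
    ∑ x : ZMod q, f x = ∑ u : (ZMod q)ˣ, f u := by
  rw [sum_split f hq, h, zero_add]

lemma std_ne_zero (hq : q.Prime) : (ZMod.stdAddChar (N := q)) ≠ 0 := by
  haveI := Fact.mk hq
  intro h
  have h1 : (ZMod.stdAddChar (N := q)) 1 = (ZMod.stdAddChar (N := q)) 0 := by
    rw [h]; simp
  exact one_ne_zero (ZMod.injective_stdAddChar (N := q) h1)

lemma sum_std (hq : q.Prime) : ∑ x : ZMod q, ZMod.stdAddChar (N := q) x = 0 := by
  classical
  rw [AddChar.sum_eq_ite]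
  simp [std_ne_zero hq]

lemma gauss'_eq (hq : q.Prime) (χ : DirichletCharacter ℂ q) :
    gaussSum' χ = ∑ u : (ZMod q)ˣ, χ u * ZMod.stdAddChar (u : ZMod q) := by
  haveI := Fact.mk hq
  rw [gaussSum', sum_eq_sum_units hq _ (by
    rw [MulChar.map_nonunit χ not_isUnit_zero, zero_mul])]
  exact Finset.sum_congr rfl fun a _ => by rw [e_std]

lemma gauss'_one (hq : q.Prime) : gaussSum' (1 : DirichletCharacter ℂ q) = -1 := by
  rw [gauss'_eq hq]
  have h := sum_std hq
  rw [sum_split _ hq, AddChar.map_zero_eq_one] at h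
  have : ∑ u : (ZMod q)ˣ, ZMod.stdAddChar ((u : ZMod q)) = -1 := by linear_combination h
  rw [← this]
  exact Finset.sum_congr rfl fun u _ => by
    rw [MulChar.one_apply_coe, one_mul]

lemma conj_char (χ : DirichletCharacter ℂ q) (v : (ZMod q)ˣ) (hq : q.Prime) :
    (starRingEnd ℂ) (χ (v : ZMod q)) = χ ((v⁻¹ : (ZMod q)ˣ) : ZMod q) := by
  haveI := Fact.mk hq
  rw [starRingEnd_apply, MulChar.star_apply', MulChar.inv_apply' , ← Units.val_inv_eq_inv_val]

variable {q : ℕ} [NeZero q]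

lemma weighted (hq : q.Prime) (c : ZMod q) :
    ∑ χ : DirichletCharacter ℂ q, (1 + χ (-1)) / 2 * χ c
      = (q.totient : ℂ) / 2 *
        ((if c = 1 then (1:ℂ) else 0) + (if c = -1 then (1:ℂ) else 0)) := by
  classical
  have key : ∀ χ : DirichletCharacter ℂ q, (1 + χ (-1)) / 2 * χ c = (χ c + χ (-c)) / 2 := by
    intro χ
    rw [show (-c : ZMod q) = -1 * c by ring, map_mul]
    ring
  rw [Finset.sum_congr rfl (fun χ _ => key χ), ← Finset.sum_div, Finset.sum_add_distrib,
    DirichletCharacter.sum_characters_eq, DirichletCharacter.sum_characters_eq]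
  have h : (-c = 1) ↔ (c = -1) := by
    constructor
    · intro h; rw [← h]; ring
    · intro h; rw [h]; ring
  simp only [h]
  split_ifs <;> ring

lemma primitive_iff (hq : q.Prime) (χ : DirichletCharacter ℂ q) :
    χ.IsPrimitive ↔ χ ≠ 1 := by
  rw [DirichletCharacter.isPrimitive_def]
  constructor
  · intro h h1
    subst h1
    rw [DirichletCharacter.conductor_one] at h
    exact hq.one_lt.ne h
  · intro h
    rcases hq.eq_one_or_self_of_dvd _ (DirichletCharacter.conductor_dvd_level χ) with h1 | h1
    · exact absurd ((DirichletCharacter.eq_one_iff_conductor_eq_one).mpr h1) h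
    · exact h1

lemma stepB (hq : q.Prime) (v : (ZMod q)ˣ) :
    ∑ χ : DirichletCharacter ℂ q,
      (1 + χ (-1)) / 2 * ((starRingEnd ℂ) (χ (v : ZMod q)) * gaussSum' χ ^ 2)
    = (q.totient : ℂ) / 2 *
        (kloosterman 1 (v : ZMod q) + kloosterman 1 (-(v : ZMod q))) := by
  classical
  haveI := Fact.mk hq
  have hK : ∀ b : ZMod q, kloosterman 1 b
      = ∑ x : (ZMod q)ˣ, ZMod.stdAddChar (x : ZMod q) *
          ZMod.stdAddChar (b * ((x⁻¹ : (ZMod q)ˣ) : ZMod q)) := by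
    intro b
    rw [kloosterman]
    refine Finset.sum_congr rfl fun x _ => ?_
    rw [e_std, one_mul, AddChar.map_add_eq_mul]
  calc
    ∑ χ : DirichletCharacter ℂ q, (1 + χ (-1)) / 2 *
        ((starRingEnd ℂ) (χ (v : ZMod q)) * gaussSum' χ ^ 2)
      = ∑ χ : DirichletCharacter ℂ q, ∑ a : (ZMod q)ˣ, ∑ b : (ZMod q)ˣ,
          ((1 + χ (-1)) / 2 * χ ((v⁻¹ * a * b : (ZMod q)ˣ) : ZMod q)) *
            (ZMod.stdAddChar (a : ZMod q) * ZMod.stdAddChar (b : ZMod q)) := by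
        refine Finset.sum_congr rfl fun χ _ => ?_
        rw [conj_char χ v hq, gauss'_eq hq, sq, Finset.sum_mul_sum]
        rw [Finset.mul_sum, Finset.mul_sum]
        refine Finset.sum_congr rfl fun a _ => ?_
        rw [Finset.mul_sum, Finset.mul_sum]
        refine Finset.sum_congr rfl fun b _ => ?_
        have hh : χ ((v⁻¹ * a * b : (ZMod q)ˣ) : ZMod q)
            = χ ((v⁻¹ : (ZMod q)ˣ) : ZMod q) * χ (a : ZMod q) * χ (b : ZMod q) := by
          rw [Units.val_mul, Units.val_mul, map_mul, map_mul]
        rw [hh]; ring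
    _ = ∑ a : (ZMod q)ˣ, ∑ b : (ZMod q)ˣ,
          (ZMod.stdAddChar (a : ZMod q) * ZMod.stdAddChar (b : ZMod q)) *
            ∑ χ : DirichletCharacter ℂ q,
              (1 + χ (-1)) / 2 * χ ((v⁻¹ * a * b : (ZMod q)ˣ) : ZMod q) := by
        rw [Finset.sum_comm]
        refine Finset.sum_congr rfl fun a _ => ?_
        rw [Finset.sum_comm]
        refine Finset.sum_congr rfl fun b _ => ?_
        rw [Finset.mul_sum]
        exact Finset.sum_congr rfl fun χ _ => by ring
    _ = ∑ a : (ZMod q)ˣ, ∑ b : (ZMod q)ˣ,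
          (ZMod.stdAddChar (a : ZMod q) * ZMod.stdAddChar (b : ZMod q)) *
            ((q.totient : ℂ) / 2 * ((if b = a⁻¹ * v then (1:ℂ) else 0)
              + (if b = -(a⁻¹ * v) then (1:ℂ) else 0))) := by
        refine Finset.sum_congr rfl fun a _ => Finset.sum_congr rfl fun b _ => ?_
        rw [weighted hq]
        have key : ∀ w : (ZMod q)ˣ, (v⁻¹ * a * b = w ↔ b = a⁻¹ * v * w) := by
          intro w
          constructor <;> intro h
          · rw [← h]; group
          · rw [h]; group
        have h1 : (((v⁻¹ * a * b : (ZMod q)ˣ) : ZMod q) = 1) ↔ b = a⁻¹ * v := by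
          rw [← Units.val_one, ← Units.ext_iff, key 1, mul_one]
        have h2 : (((v⁻¹ * a * b : (ZMod q)ˣ) : ZMod q) = -1) ↔ b = -(a⁻¹ * v) := by
          rw [show (-1 : ZMod q) = ((-1 : (ZMod q)ˣ) : ZMod q) by simp, ← Units.ext_iff,
            key (-1), mul_neg_one]
        simp only [h1, h2]
    _ = ∑ a : (ZMod q)ˣ, (q.totient : ℂ) / 2 *
          (ZMod.stdAddChar (a : ZMod q) * ZMod.stdAddChar ((a⁻¹ * v : (ZMod q)ˣ) : ZMod q)
            + ZMod.stdAddChar (a : ZMod q) *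
                ZMod.stdAddChar ((-(a⁻¹ * v) : (ZMod q)ˣ) : ZMod q)) := by
        refine Finset.sum_congr rfl fun a _ => ?_
        simp only [mul_add, mul_ite, mul_one, mul_zero, Finset.sum_add_distrib,
          Finset.sum_ite_eq', Finset.mem_univ, if_true]
        ring
    _ = (q.totient : ℂ) / 2 *
          (kloosterman 1 (v : ZMod q) + kloosterman 1 (-(v : ZMod q))) := by
        rw [hK, hK, ← Finset.mul_sum, ← Finset.sum_add_distrib]
        refine congrArg _ (Finset.sum_congr rfl fun a _ => ?_)
        congr 2
        · rw [Units.val_mul, mul_comm]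
        · rw [Units.val_neg, Units.val_mul, neg_mul, mul_comm ((a⁻¹ : (ZMod q)ˣ) : ZMod q)]

open scoped Classical in
/-- For `q` prime and `m, n` coprime to `q`,
`Σ_{χ even primitive mod q} χ̄(mn)·τ(χ)² = (1/2)·φ(q)·(S(1,mn;q)+S(1,−mn;q)) − 1`. -/
theorem sum_even_primitive_char_gauss_sq (q : ℕ) (hq : q.Prime) [NeZero q] (m n : ℤ)
    (hmn : IsCoprime (m * n) (q : ℤ)) :
    ∑ χ : DirichletCharacter ℂ q,
      (if χ.IsPrimitive ∧ χ.Even then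
        (starRingEnd ℂ) (χ ((m : ZMod q) * (n : ZMod q))) * (gaussSum' χ) ^ 2 else 0)
    = (1 / 2 : ℂ) * (Nat.totient q : ℂ) *
        (kloosterman (1 : ZMod q) ((m : ZMod q) * (n : ZMod q))
          + kloosterman (1 : ZMod q) (-((m : ZMod q) * (n : ZMod q)))) - 1 := by
  haveI := Fact.mk hq
  set u : ZMod q := (m : ZMod q) * (n : ZMod q) with hu_def
  have hu : IsUnit u := by
    obtain ⟨a, b, hab⟩ := hmn
    refine IsUnit.of_mul_eq_one (a := u) ((a : ℤ) : ZMod q) ?_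
    have h2 := congrArg (fun z : ℤ => (z : ZMod q)) hab
    push_cast at h2
    simp only [ZMod.natCast_self, mul_zero, add_zero] at h2
    linear_combination h2
  obtain ⟨v, hv⟩ := hu
  have hA : ∀ χ : DirichletCharacter ℂ q,
      (if χ.IsPrimitive ∧ χ.Even then
        (starRingEnd ℂ) (χ u) * (gaussSum' χ) ^ 2 else 0)
      = (1 + χ (-1)) / 2 * ((starRingEnd ℂ) (χ u) * gaussSum' χ ^ 2)
        - (if χ = 1 then (1:ℂ) else 0) := by
    intro χ
    by_cases h1 : χ = 1
    · subst h1
      rw [if_neg (fun hc => ((primitive_iff hq 1).mp hc.1) rfl), if_pos rfl,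
        MulChar.one_apply (x := (-1 : ZMod q)) (isUnit_one.neg),
        MulChar.one_apply (x := u) (hv ▸ v.isUnit), gauss'_one hq]
      simp
    · rw [if_neg h1]
      by_cases h2 : χ.Even
      · rw [if_pos ⟨(primitive_iff hq χ).mpr h1, h2⟩, show χ (-1) = 1 from h2]
        ring
      · have h3 : χ (-1) = -1 := (DirichletCharacter.even_or_odd χ).resolve_left h2
        rw [if_neg (fun hc => h2 hc.2), h3]
        ring
  rw [Finset.sum_congr rfl (fun χ _ => hA χ), Finset.sum_sub_distrib,
    Finset.sum_ite_eq' Finset.univ (1 : DirichletCharacter ℂ q) (fun _ => (1:ℂ)),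
    if_pos (Finset.mem_univ _), ← hv, stepB hq v]
  ring
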